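/- Let L > 0 and σ > 2π²/L². For η₂ ∈ (0, √σ) set η₁ = √(2σ − η₂²), κ = √((η₁² − η₂²)/η₁²) ∈ (0,1), and define the period function T(η₂) = 2√2 · K(κ) / η₁, where K is the complete elliptic integral of the first kind. Then there exists a unique η₂ ∈ (0, √σ) such that T(η₂) = L. (This is the existence and uniqueness of the modulus parametrizing the L-periodic dnoidal travelling-wave profile of the Benney system.) -/

import Mathlib

open Real MeasureTheory intervalIntegral

/-- The complete elliptic integral of the first kind. -/
noncomputable def ellK (κ : ℝ) : ℝ :=
  ∫ t in (0:ℝ)..1, 1 / Real.sqrt ((1 - t ^ 2) * (1 - κ ^ 2 * t ^ 2))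

noncomputable def Hfun (σ s : ℝ) : ℝ :=
  ∫ θ in (0:ℝ)..(π/2), 1 / Real.sqrt ((2*σ - s) * Real.cos θ ^ 2 + s * Real.sin θ ^ 2)

lemma sin_image_Ioo : Real.sin '' Set.Ioo 0 (π/2) = Set.Ioo 0 1 := by
  ext y
  constructor
  · rintro ⟨θ, ⟨h0, h1⟩, rfl⟩
    refine ⟨Real.sin_pos_of_pos_of_lt_pi h0 (h1.trans (by linarith [Real.pi_pos])), ?_⟩
    have := Real.strictMonoOn_sin (a := θ) (b := π/2)
      ⟨by linarith [Real.pi_pos], h1.le⟩ ⟨by linarith [Real.pi_pos], le_refl _⟩ h1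
    simpa using this
  · rintro ⟨h0, h1⟩
    exact ⟨Real.arcsin y, ⟨Real.arcsin_pos.2 h0, Real.arcsin_lt_pi_div_two.2 h1⟩,
      Real.sin_arcsin (by linarith) (by linarith)⟩

lemma ellK_eq (k : ℝ) (hk0 : 0 ≤ k) (hk1 : k < 1) :
    ellK k = ∫ θ in (0:ℝ)..(π/2), 1 / Real.sqrt (1 - k ^ 2 * Real.sin θ ^ 2) := by
  have hπ : (0:ℝ) < π/2 := by positivity
  have key := MeasureTheory.integral_image_eq_integral_abs_deriv_smul
    (s := Set.Ioo 0 (π/2)) (f := Real.sin) (f' := Real.cos) measurableSet_Ioo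
    (fun x _ => (Real.hasDerivAt_sin x).hasDerivWithinAt)
    (Real.injOn_sin.mono (Set.Ioo_subset_Icc_self.trans (Set.Icc_subset_Icc (by linarith [Real.pi_pos]) le_rfl)))
    (fun t => 1 / Real.sqrt ((1 - t ^ 2) * (1 - k ^ 2 * t ^ 2)))
  rw [sin_image_Ioo] at key
  have hcong : ∀ θ ∈ Set.Ioo 0 (π/2),
      |Real.cos θ| • (1 / Real.sqrt ((1 - Real.sin θ ^ 2) * (1 - k ^ 2 * Real.sin θ ^ 2)))
        = 1 / Real.sqrt (1 - k ^ 2 * Real.sin θ ^ 2) := by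
    intro θ hθ
    have hc : 0 < Real.cos θ := Real.cos_pos_of_mem_Ioo ⟨by linarith [hθ.1, Real.pi_pos], hθ.2⟩
    have h1 : (1 - Real.sin θ ^ 2) = Real.cos θ ^ 2 := by
      have := Real.sin_sq_add_cos_sq θ; linarith
    rw [h1, Real.sqrt_mul (by positivity), Real.sqrt_sq hc.le]
    rw [abs_of_pos hc, smul_eq_mul]
    have hs : 0 < Real.sqrt (1 - k ^ 2 * Real.sin θ ^ 2) := by
      apply Real.sqrt_pos.2
      nlinarith [Real.neg_one_le_sin θ, Real.sin_le_one θ, sq_nonneg (Real.sin θ), sq_nonneg k]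
    field_simp
  rw [MeasureTheory.setIntegral_congr_fun measurableSet_Ioo hcong] at key
  rw [ellK, intervalIntegral.integral_of_le (by norm_num : (0:ℝ) ≤ 1),
    intervalIntegral.integral_of_le hπ.le,
    MeasureTheory.integral_Ioc_eq_integral_Ioo, MeasureTheory.integral_Ioc_eq_integral_Ioo]
  exact key

lemma expr_eq (σ η₂ : ℝ) (hσ : 0 < σ) (hη : η₂ ∈ Set.Ioo 0 (Real.sqrt σ)) :
    2 * Real.sqrt 2 *
          ellK (Real.sqrt (((Real.sqrt (2 * σ - η₂ ^ 2)) ^ 2 - η₂ ^ 2) /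
            (Real.sqrt (2 * σ - η₂ ^ 2)) ^ 2)) / Real.sqrt (2 * σ - η₂ ^ 2)
      = 2 * Real.sqrt 2 * Hfun σ (η₂ ^ 2) := by
  obtain ⟨h0, h1⟩ := hη
  have hs : η₂ ^ 2 < σ := (Real.lt_sqrt h0.le).1 h1
  set s := η₂ ^ 2 with hsdef
  have hs0 : 0 < s := by positivity
  have hA : 0 < 2 * σ - s := by linarith
  have hsq : (Real.sqrt (2 * σ - η₂ ^ 2)) ^ 2 = 2 * σ - s := Real.sq_sqrt hA.le
  rw [hsq]
  set r := (2 * σ - s - s) / (2 * σ - s) with hrdef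
  have hr0 : 0 ≤ r := by
    apply div_nonneg (by linarith) hA.le
  have hr1 : r < 1 := by
    rw [div_lt_one hA]; linarith
  have hk2 : (Real.sqrt r) ^ 2 = r := Real.sq_sqrt hr0
  have hk1 : Real.sqrt r < 1 := by
    rw [show (1:ℝ) = Real.sqrt 1 by simp]
    exact Real.sqrt_lt_sqrt hr0 hr1
  rw [ellK_eq _ (Real.sqrt_nonneg r) hk1]
  have hη₁ : 0 < Real.sqrt (2 * σ - s) := Real.sqrt_pos.2 hA
  rw [div_eq_mul_inv, mul_assoc, mul_comm (∫ θ in (0:ℝ)..(π/2),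
    1 / Real.sqrt (1 - Real.sqrt r ^ 2 * Real.sin θ ^ 2)), ← intervalIntegral.integral_const_mul]
  rw [Hfun]
  congr 1
  apply intervalIntegral.integral_congr
  intro θ _
  simp only []
  have h1s : Real.sin θ ^ 2 + Real.cos θ ^ 2 = 1 := Real.sin_sq_add_cos_sq θ
  rw [hk2]
  have key : (2*σ - s) * Real.cos θ ^ 2 + s * Real.sin θ ^ 2
      = (2 * σ - s) * (1 - r * Real.sin θ ^ 2) := by
    rw [hrdef]; field_simp; nlinarith [h1s]
  rw [key, Real.sqrt_mul hA.le, one_div, one_div, mul_inv]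

-- squared sum of reciprocal roots
lemma sq_recip_sum (A B : ℝ) (hA : 0 < A) (hB : 0 < B) :
    (1/Real.sqrt A + 1/Real.sqrt B)^2 = 1/A + 1/B + 2/Real.sqrt (A*B) := by
  rw [add_sq, div_pow, div_pow, one_pow, Real.sq_sqrt hA.le, Real.sq_sqrt hB.le,
    Real.sqrt_mul hA.le]
  ring

lemma key_ineq_le (A₁ B₁ A₂ B₂ : ℝ) (hA₁ : 0 < A₁) (hB₁ : 0 < B₁) (hA₂ : 0 < A₂) (hB₂ : 0 < B₂)
    (hsum : A₁ + B₁ = A₂ + B₂) (hprod : A₁ * B₁ ≤ A₂ * B₂) :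
    1/Real.sqrt A₂ + 1/Real.sqrt B₂ ≤ 1/Real.sqrt A₁ + 1/Real.sqrt B₁ := by
  have h1 : (1/Real.sqrt A₂ + 1/Real.sqrt B₂)^2 ≤ (1/Real.sqrt A₁ + 1/Real.sqrt B₁)^2 := by
    rw [sq_recip_sum _ _ hA₁ hB₁, sq_recip_sum _ _ hA₂ hB₂]
    have hg₁ : 0 < A₁ * B₁ := mul_pos hA₁ hB₁
    have hg₂ : 0 < A₂ * B₂ := mul_pos hA₂ hB₂
    have t1 : 1/A₂ + 1/B₂ ≤ 1/A₁ + 1/B₁ := by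
      rw [div_add_div _ _ hA₂.ne' hB₂.ne', div_add_div _ _ hA₁.ne' hB₁.ne']
      rw [div_le_div_iff₀ hg₂ hg₁]
      nlinarith
    have t2 : 2/Real.sqrt (A₂*B₂) ≤ 2/Real.sqrt (A₁*B₁) := by
      apply div_le_div_of_nonneg_left (by norm_num) (Real.sqrt_pos.2 hg₁)
      exact Real.sqrt_le_sqrt hprod
    linarith
  have hpos : 0 ≤ 1/Real.sqrt A₁ + 1/Real.sqrt B₁ := by positivity
  nlinarith [Real.sqrt_nonneg A₂, Real.sqrt_nonneg B₂,
    sq_nonneg (1/Real.sqrt A₂ + 1/Real.sqrt B₂)]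

lemma key_ineq_lt (A₁ B₁ A₂ B₂ : ℝ) (hA₁ : 0 < A₁) (hB₁ : 0 < B₁) (hA₂ : 0 < A₂) (hB₂ : 0 < B₂)
    (hsum : A₁ + B₁ = A₂ + B₂) (hprod : A₁ * B₁ < A₂ * B₂) :
    1/Real.sqrt A₂ + 1/Real.sqrt B₂ < 1/Real.sqrt A₁ + 1/Real.sqrt B₁ := by
  have h1 : (1/Real.sqrt A₂ + 1/Real.sqrt B₂)^2 < (1/Real.sqrt A₁ + 1/Real.sqrt B₁)^2 := by
    rw [sq_recip_sum _ _ hA₁ hB₁, sq_recip_sum _ _ hA₂ hB₂]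
    have hg₁ : 0 < A₁ * B₁ := mul_pos hA₁ hB₁
    have hg₂ : 0 < A₂ * B₂ := mul_pos hA₂ hB₂
    have t1 : 1/A₂ + 1/B₂ < 1/A₁ + 1/B₁ := by
      rw [div_add_div _ _ hA₂.ne' hB₂.ne', div_add_div _ _ hA₁.ne' hB₁.ne']
      rw [div_lt_div_iff₀ hg₂ hg₁]
      nlinarith
    have t2 : 2/Real.sqrt (A₂*B₂) ≤ 2/Real.sqrt (A₁*B₁) := by
      apply div_le_div_of_nonneg_left (by norm_num) (Real.sqrt_pos.2 hg₁)
      exact Real.sqrt_le_sqrt hprod.le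
    linarith
  have hpos : 0 ≤ 1/Real.sqrt A₂ + 1/Real.sqrt B₂ := by positivity
  exact lt_of_pow_lt_pow_left₀ 2 (by positivity) h1

-- positivity of the quadratic form
lemma Apos (σ s θ : ℝ) (hs : 0 < s) (hsσ : s ≤ σ) :
    0 < (2*σ - s) * Real.cos θ ^ 2 + s * Real.sin θ ^ 2 := by
  nlinarith [Real.sin_sq_add_cos_sq θ, sq_nonneg (Real.cos θ), sq_nonneg (Real.sin θ)]

lemma contf (σ s : ℝ) (hs : 0 < s) (hsσ : s ≤ σ) :
    Continuous fun θ => 1 / Real.sqrt ((2*σ - s) * Real.cos θ ^ 2 + s * Real.sin θ ^ 2) := by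
  apply continuous_const.div
  · exact Real.continuous_sqrt.comp (by continuity)
  · intro θ
    exact (Real.sqrt_pos.2 (Apos σ s θ hs hsσ)).ne'

-- folding: Hfun equals integral of the symmetrized integrand
lemma fold (σ s : ℝ) (hs : 0 < s) (hsσ : s ≤ σ) :
    Hfun σ s = ∫ θ in (0:ℝ)..(π/2),
      (1 / Real.sqrt ((2*σ - s) * Real.cos θ ^ 2 + s * Real.sin θ ^ 2)
        + 1 / Real.sqrt ((2*σ - s) * Real.sin θ ^ 2 + s * Real.cos θ ^ 2)) / 2 := by
  have h1 : Continuous fun θ => 1 / Real.sqrt ((2*σ - s) * Real.cos θ ^ 2 + s * Real.sin θ ^ 2) :=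
    contf σ s hs hsσ
  have h2 : (fun θ => 1 / Real.sqrt ((2*σ - s) * Real.sin θ ^ 2 + s * Real.cos θ ^ 2))
      = fun θ => 1 / Real.sqrt ((2*σ - s) * Real.cos (π/2 - θ) ^ 2 + s * Real.sin (π/2 - θ) ^ 2) := by
    funext θ; rw [Real.cos_pi_div_two_sub, Real.sin_pi_div_two_sub]
  have h2c : Continuous fun θ => 1 / Real.sqrt ((2*σ - s) * Real.sin θ ^ 2 + s * Real.cos θ ^ 2) := by
    rw [h2]; exact h1.comp (by continuity)
  have hrefl : (∫ θ in (0:ℝ)..(π/2),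
      1 / Real.sqrt ((2*σ - s) * Real.sin θ ^ 2 + s * Real.cos θ ^ 2)) = Hfun σ s := by
    rw [h2]
    have := intervalIntegral.integral_comp_sub_left
      (a := (0:ℝ)) (b := π/2)
      (fun θ => 1 / Real.sqrt ((2*σ - s) * Real.cos θ ^ 2 + s * Real.sin θ ^ 2)) (π/2)
    simpa [Hfun] using this
  have hint : ∀ f : ℝ → ℝ, Continuous f → IntervalIntegrable f volume 0 (π/2) :=
    fun f hf => hf.intervalIntegrable 0 (π/2)
  rw [intervalIntegral.integral_div, intervalIntegral.integral_add (hint _ h1) (hint _ h2c), hrefl]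
  rw [Hfun]
  ring

-- strict antitonicity of Hfun
lemma Hfun_strict_anti (σ s₁ s₂ : ℝ) (hσ : 0 < σ) (h1 : 0 < s₁) (h12 : s₁ < s₂) (h2 : s₂ ≤ σ) :
    Hfun σ s₂ < Hfun σ s₁ := by
  rw [fold σ s₁ h1 (by linarith), fold σ s₂ (by linarith) h2]
  have hπ : (0:ℝ) < π/2 := by positivity
  set A := fun (s θ : ℝ) => (2*σ - s) * Real.cos θ ^ 2 + s * Real.sin θ ^ 2 with hA
  set B := fun (s θ : ℝ) => (2*σ - s) * Real.sin θ ^ 2 + s * Real.cos θ ^ 2 with hB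
  have hApos : ∀ s θ, 0 < s → s ≤ σ → 0 < A s θ := fun s θ a b => Apos σ s θ a b
  have hBpos : ∀ s θ, 0 < s → s ≤ σ → 0 < B s θ := by
    intro s θ a b
    have := Apos σ s (π/2 - θ) a b
    simpa [hA, hB, Real.cos_pi_div_two_sub, Real.sin_pi_div_two_sub] using this
  apply intervalIntegral.integral_lt_integral_of_continuousOn_of_le_of_exists_lt hπ
  · -- continuity of s₂ integrand
    apply Continuous.continuousOn
    apply Continuous.div_const
    apply Continuous.add (contf σ s₂ (by linarith) h2)
    have h2' : (fun θ => 1 / Real.sqrt (B s₂ θ))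
        = (fun θ => 1 / Real.sqrt (A s₂ θ)) ∘ (fun θ => π/2 - θ) := by
      funext θ; simp [hA, hB, Real.cos_pi_div_two_sub, Real.sin_pi_div_two_sub]
    rw [show (fun θ => 1 / Real.sqrt ((2*σ - s₂) * Real.sin θ ^ 2 + s₂ * Real.cos θ ^ 2))
        = fun θ => 1 / Real.sqrt (B s₂ θ) from rfl, h2']
    exact (contf σ s₂ (by linarith) h2).comp (by continuity)
  · apply Continuous.continuousOn
    apply Continuous.div_const
    apply Continuous.add (contf σ s₁ h1 (by linarith))
    have h2' : (fun θ => 1 / Real.sqrt (B s₁ θ))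
        = (fun θ => 1 / Real.sqrt (A s₁ θ)) ∘ (fun θ => π/2 - θ) := by
      funext θ; simp [hA, hB, Real.cos_pi_div_two_sub, Real.sin_pi_div_two_sub]
    rw [show (fun θ => 1 / Real.sqrt ((2*σ - s₁) * Real.sin θ ^ 2 + s₁ * Real.cos θ ^ 2))
        = fun θ => 1 / Real.sqrt (B s₁ θ) from rfl, h2']
    exact (contf σ s₁ h1 (by linarith)).comp (by continuity)
  · -- pointwise ≤
    intro θ _
    have c := Real.sin_sq_add_cos_sq θ
    apply div_le_div_of_nonneg_right ?_ (by norm_num)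
    apply key_ineq_le _ _ _ _ (hApos s₁ θ h1 (by linarith)) (hBpos s₁ θ h1 (by linarith))
      (hApos s₂ θ (by linarith) h2) (hBpos s₂ θ (by linarith) h2)
    · simp only [hA, hB]; ring
    · simp only [hA, hB]
      have hd : Real.sin θ ^ 2 = 1 - Real.cos θ ^ 2 := by linarith
      rw [hd]
      nlinarith [mul_nonneg (mul_nonneg (by linarith : (0:ℝ) ≤ s₂ - s₁)
        (by linarith : (0:ℝ) ≤ 2*σ - s₁ - s₂)) (sq_nonneg (2 * Real.cos θ ^ 2 - 1))]
  · -- strict at θ = 0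
    refine ⟨0, ⟨le_refl _, hπ.le⟩, ?_⟩
    apply div_lt_div_of_pos_right ?_ (by norm_num)
    have hc0 : Real.cos 0 = 1 := Real.cos_zero
    have hs0 : Real.sin 0 = 0 := Real.sin_zero
    apply key_ineq_lt _ _ _ _ (hApos s₁ 0 h1 (by linarith)) (hBpos s₁ 0 h1 (by linarith))
      (hApos s₂ 0 (by linarith) h2) (hBpos s₂ 0 (by linarith) h2)
    · simp only [hA, hB]; ring
    · simp only [hA, hB, hc0, hs0]; nlinarith

lemma A_ge (σ s θ : ℝ) (hsσ : s ≤ σ) :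
    s ≤ (2*σ - s) * Real.cos θ ^ 2 + s * Real.sin θ ^ 2 := by
  have hd : Real.sin θ ^ 2 = 1 - Real.cos θ ^ 2 := by linarith [Real.sin_sq_add_cos_sq θ]
  rw [hd]
  nlinarith [mul_nonneg (by linarith : (0:ℝ) ≤ σ - s) (sq_nonneg (Real.cos θ))]

lemma Hfun_contOn (σ s₀ : ℝ) (h0 : 0 < s₀) (hσ : s₀ ≤ σ) :
    ContinuousOn (Hfun σ) (Set.Icc s₀ σ) := by
  have hcont : Continuous fun s => ∫ θ in (0:ℝ)..(π/2),
      1 / Real.sqrt (max ((2*σ - s) * Real.cos θ ^ 2 + s * Real.sin θ ^ 2) s₀) := by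
    apply intervalIntegral.continuous_parametric_intervalIntegral_of_continuous'
      (μ := volume) (f := fun s θ => 1 / Real.sqrt (max ((2*σ - s) * Real.cos θ ^ 2
        + s * Real.sin θ ^ 2) s₀))
    apply continuous_const.div
    · apply Real.continuous_sqrt.comp
      apply Continuous.max ?_ continuous_const
      have : Continuous fun p : ℝ × ℝ => (2*σ - p.1) * Real.cos p.2 ^ 2 + p.1 * Real.sin p.2 ^ 2 := by
        fun_prop
      exact this
    · intro p
      have : 0 < max ((2*σ - p.1) * Real.cos p.2 ^ 2 + p.1 * Real.sin p.2 ^ 2) s₀ :=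
        lt_of_lt_of_le h0 (le_max_right _ _)
      exact (Real.sqrt_pos.2 this).ne'
  apply hcont.continuousOn.congr
  intro s hs
  rw [Hfun]
  apply intervalIntegral.integral_congr
  intro θ _
  have : s₀ ≤ (2*σ - s) * Real.cos θ ^ 2 + s * Real.sin θ ^ 2 :=
    le_trans hs.1 (A_ge σ s θ hs.2)
  simp only [max_eq_left this]

lemma Hfun_at_sigma (σ : ℝ) (hσ : 0 < σ) : Hfun σ σ = π / (2 * Real.sqrt σ) := by
  rw [Hfun]
  have : ∀ θ : ℝ, (2*σ - σ) * Real.cos θ ^ 2 + σ * Real.sin θ ^ 2 = σ := by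
    intro θ; nlinarith [Real.sin_sq_add_cos_sq θ]
  rw [intervalIntegral.integral_congr (g := fun _ => 1 / Real.sqrt σ) (fun θ _ => by rw [this θ])]
  rw [intervalIntegral.integral_const]
  rw [smul_eq_mul]
  ring

lemma exists_big (σ L' : ℝ) (hσ : 0 < σ) (hL' : 0 < L') :
    ∃ s₀, 0 < s₀ ∧ s₀ < σ ∧ L' < Hfun σ s₀ := by
  set c : ℝ := Real.sqrt (2*σ) with hc
  have hcpos : 0 < c := Real.sqrt_pos.2 (by linarith)
  set a : ℝ := c * (π/2) with ha
  have hapos : 0 < a := by positivity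
  set b : ℝ := L' * c with hb
  have hbpos : 0 < b := by positivity
  set ε : ℝ := a / Real.exp b with hε
  have hεpos : 0 < ε := by positivity
  refine ⟨min (σ/2) (ε^2/2), lt_min (by linarith) (by positivity), ?_, ?_⟩
  · exact lt_of_le_of_lt (min_le_left _ _) (by linarith)
  set s₀ : ℝ := min (σ/2) (ε^2/2) with hs₀
  have hs₀pos : 0 < s₀ := lt_min (by linarith) (by positivity)
  have hs₀σ : s₀ ≤ σ := le_trans (min_le_left _ _) (by linarith)
  set e : ℝ := Real.sqrt s₀ with he
  have hepos : 0 < e := Real.sqrt_pos.2 hs₀pos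
  have helt : e < ε := by
    have h1 : s₀ ≤ ε^2/2 := min_le_right _ _
    have h2 : e ≤ Real.sqrt (ε^2/2) := Real.sqrt_le_sqrt h1
    have h3 : Real.sqrt (ε^2/2) < Real.sqrt (ε^2) := by
      apply Real.sqrt_lt_sqrt (by positivity); nlinarith
    rw [Real.sqrt_sq hεpos.le] at h3
    linarith
  -- pointwise bound
  have hπ : (0:ℝ) < π/2 := by positivity
  have hptwise : ∀ θ ∈ Set.Icc (0:ℝ) (π/2),
      1 / (c * (π/2 - θ) + e) ≤ 1 / Real.sqrt ((2*σ - s₀) * Real.cos θ ^ 2 + s₀ * Real.sin θ ^ 2) := by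
    intro θ ⟨hθ0, hθ1⟩
    have hA : (2*σ - s₀) * Real.cos θ ^ 2 + s₀ * Real.sin θ ^ 2 ≤ (c * (π/2 - θ) + e)^2 := by
      have h1 : Real.cos θ ≤ π/2 - θ := by
        rw [← Real.sin_pi_div_two_sub]
        exact Real.sin_le (by linarith)
      have h2 : Real.cos θ ^ 2 ≤ (π/2 - θ)^2 := by
        have hcn : 0 ≤ Real.cos θ := Real.cos_nonneg_of_mem_Icc ⟨by linarith [Real.pi_pos], hθ1⟩
        nlinarith
      have hc2 : c^2 = 2*σ := Real.sq_sqrt (by linarith)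
      have he2 : e^2 = s₀ := Real.sq_sqrt hs₀pos.le
      nlinarith [Real.sin_sq_add_cos_sq θ, sq_nonneg (Real.sin θ), hs₀pos,
        mul_nonneg (mul_nonneg hcpos.le (by linarith : (0:ℝ) ≤ π/2 - θ)) hepos.le]
    have hsum : 0 < c * (π/2 - θ) + e := by
      have : 0 ≤ c * (π/2 - θ) := mul_nonneg hcpos.le (by linarith)
      linarith
    have := Real.sqrt_le_sqrt hA
    rw [Real.sqrt_sq hsum.le] at this
    apply one_div_le_one_div_of_le ?_ this
    apply Real.sqrt_pos.2
    nlinarith [A_ge σ s₀ θ hs₀σ]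
  -- integral comparison
  have hIle : (∫ θ in (0:ℝ)..(π/2), 1 / (c * (π/2 - θ) + e)) ≤ Hfun σ s₀ := by
    rw [Hfun]
    apply intervalIntegral.integral_mono_on hπ.le
    · apply ContinuousOn.intervalIntegrable
      apply ContinuousOn.div continuousOn_const (by fun_prop)
      intro θ hθ
      rw [Set.uIcc_of_le hπ.le] at hθ
      have : 0 ≤ c * (π/2 - θ) := mul_nonneg hcpos.le (by linarith [hθ.2])
      intro hzero
      linarith
    · apply Continuous.intervalIntegrable
      apply continuous_const.div (Real.continuous_sqrt.comp (by fun_prop))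
      intro θ
      have : 0 < (2*σ - s₀) * Real.cos θ ^ 2 + s₀ * Real.sin θ ^ 2 := by
        nlinarith [A_ge σ s₀ θ hs₀σ]
      exact (Real.sqrt_pos.2 this).ne'
    · exact hptwise
  -- compute the lower integral
  have hIeq : (∫ θ in (0:ℝ)..(π/2), 1 / (c * (π/2 - θ) + e)) = c⁻¹ * Real.log ((a + e)/e) := by
    have h1 : (∫ θ in (0:ℝ)..(π/2), 1 / (c * (π/2 - θ) + e))
        = ∫ u in (0:ℝ)..(π/2), 1 / (c * u + e) := by
      have := intervalIntegral.integral_comp_sub_left (a := (0:ℝ)) (b := π/2)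
        (fun u => 1 / (c * u + e)) (π/2)
      simpa using this
    rw [h1]
    have h2 := intervalIntegral.integral_comp_mul_add (a := (0:ℝ)) (b := π/2)
      (f := fun x => 1/x) (c := c) (hc := hcpos.ne') e
    simp only [mul_zero, zero_add] at h2
    have h0mem : (0:ℝ) ∉ Set.uIcc e (c * (π / 2) + e) := by
      intro h
      rcases Set.mem_uIcc.1 h with ⟨h1', h2'⟩ | ⟨h1', h2'⟩
      · linarith
      · nlinarith [mul_pos hcpos hπ]
    rw [h2, smul_eq_mul, integral_one_div h0mem]
  -- conclude
  have hεe : ε * Real.exp b = a := div_mul_cancel₀ _ (Real.exp_pos b).ne'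
  have h1 : Real.exp b < (a+e)/e := by
    rw [lt_div_iff₀ hepos]
    have := mul_lt_mul_of_pos_right helt (Real.exp_pos b)
    linarith
  have h2 : b < Real.log ((a+e)/e) := by
    rw [← Real.log_exp b]
    exact Real.log_lt_log (Real.exp_pos b) h1
  have hlog : L' < c⁻¹ * Real.log ((a + e)/e) := by
    have h3 : c⁻¹ * b < c⁻¹ * Real.log ((a+e)/e) :=
      mul_lt_mul_of_pos_left h2 (inv_pos.2 hcpos)
    have h4 : c⁻¹ * b = L' := by rw [hb]; field_simp
    linarith
  linarith


/-- Existence and uniqueness of the modulus parametrizing the `L`-periodic dnoidal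
travelling-wave profile: for `L > 0` and `σ > 2π²/L²`, there is a unique
`η₂ ∈ (0, √σ)` such that, with `η₁ = √(2σ − η₂²)` and `κ = √((η₁² − η₂²)/η₁²)`,
the period `T(η₂) = 2√2 K(κ)/η₁` equals `L`. -/
theorem dnoidal_period_existence_uniqueness (L σ : ℝ) (hL : 0 < L)
    (hσ : 2 * π ^ 2 / L ^ 2 < σ) :
    ∃! η₂ : ℝ, η₂ ∈ Set.Ioo 0 (Real.sqrt σ) ∧
      2 * Real.sqrt 2 *
          ellK (Real.sqrt (((Real.sqrt (2 * σ - η₂ ^ 2)) ^ 2 - η₂ ^ 2) /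
            (Real.sqrt (2 * σ - η₂ ^ 2)) ^ 2)) / Real.sqrt (2 * σ - η₂ ^ 2) = L := by
  have hσ0 : 0 < σ := lt_trans (by positivity) hσ
  have h2L : 2 * π ^ 2 < σ * L ^ 2 := by
    rw [div_lt_iff₀ (by positivity)] at hσ; linarith
  set cstar : ℝ := L / (2 * Real.sqrt 2) with hcstar
  have hs2 : (0:ℝ) < Real.sqrt 2 := Real.sqrt_pos.2 (by norm_num)
  have hcpos : 0 < cstar := by positivity
  -- the condition is equivalent to Hfun σ (η₂^2) = cstar
  have hiff : ∀ η₂ ∈ Set.Ioo 0 (Real.sqrt σ),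
      (2 * Real.sqrt 2 *
          ellK (Real.sqrt (((Real.sqrt (2 * σ - η₂ ^ 2)) ^ 2 - η₂ ^ 2) /
            (Real.sqrt (2 * σ - η₂ ^ 2)) ^ 2)) / Real.sqrt (2 * σ - η₂ ^ 2) = L)
        ↔ Hfun σ (η₂ ^ 2) = cstar := by
    intro η₂ hη
    rw [expr_eq σ η₂ hσ0 hη, hcstar]
    constructor
    · intro h; field_simp at h ⊢; linarith
    · intro h; rw [h]; field_simp
  -- value at the right endpoint
  have hend : Hfun σ σ < cstar := by
    rw [Hfun_at_sigma σ hσ0, hcstar]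
    rw [div_lt_div_iff₀ (by positivity) (by positivity)]
    have e1 : π * Real.sqrt 2 = Real.sqrt (2 * π ^ 2) := by
      rw [Real.sqrt_mul (by norm_num), Real.sqrt_sq Real.pi_pos.le]; ring
    have e2 : L * Real.sqrt σ = Real.sqrt (σ * L ^ 2) := by
      rw [mul_comm σ (L^2), Real.sqrt_mul (by positivity), Real.sqrt_sq hL.le]
    have : π * Real.sqrt 2 < L * Real.sqrt σ := by
      rw [e1, e2]; exact Real.sqrt_lt_sqrt (by positivity) h2L
    nlinarith
  -- existence of a point where Hfun is large
  obtain ⟨s₀, hs₀pos, hs₀σ, hbig⟩ := exists_big σ cstar hσ0 hcpos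
  -- IVT
  have hcont : ContinuousOn (Hfun σ) (Set.Icc s₀ σ) := Hfun_contOn σ s₀ hs₀pos hs₀σ.le
  have hmem : cstar ∈ Set.Icc (Hfun σ σ) (Hfun σ s₀) := ⟨hend.le, hbig.le⟩
  obtain ⟨x, hx, hxval⟩ := intermediate_value_Icc' hs₀σ.le hcont hmem
  have hxσ : x < σ := by
    rcases lt_or_eq_of_le hx.2 with h | h
    · exact h
    · exact absurd (h ▸ hxval) (by rw [show Hfun σ σ = Hfun σ σ from rfl]; exact fun hh => absurd hh (ne_of_lt hend))
  have hxpos : 0 < x := lt_of_lt_of_le hs₀pos hx.1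
  refine ⟨Real.sqrt x, ⟨⟨Real.sqrt_pos.2 hxpos, Real.sqrt_lt_sqrt hxpos.le hxσ⟩, ?_⟩, ?_⟩
  · rw [hiff _ ⟨Real.sqrt_pos.2 hxpos, Real.sqrt_lt_sqrt hxpos.le hxσ⟩]
    rw [Real.sq_sqrt hxpos.le]
    exact hxval
  · rintro y ⟨hy, hyeq⟩
    rw [hiff y hy] at hyeq
    have hyx : Hfun σ (y ^ 2) = Hfun σ x := by
      rw [hyeq, hxval]
    have hy2pos : 0 < y ^ 2 := pow_pos hy.1 2
    have hy2σ : y ^ 2 < σ := (Real.lt_sqrt hy.1.le).1 hy.2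
    have hxeq : y ^ 2 = x := by
      rcases lt_trichotomy (y ^ 2) x with h | h | h
      · exact absurd hyx (ne_of_gt (Hfun_strict_anti σ (y^2) x hσ0 hy2pos h hxσ.le))
      · exact h
      · exact absurd hyx (ne_of_lt (Hfun_strict_anti σ x (y^2) hσ0 hxpos h hy2σ.le))
    have : Real.sqrt (y ^ 2) = Real.sqrt x := by rw [hxeq]
    rwa [Real.sqrt_sq hy.1.le] at this
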